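/- For all integers n ≥ 1 and m ≥ 0, the neutrix limit as ε → 0⁺ of −∫_ε^1 t^{−m−1} (log t)^n / (1−t) dt equals Σ_{i=1}^m n!/i^{n+1} + (−1)^{n+1} · n! · ζ(n+1); that is, there exists a negligible function N(ε) such that −∫_ε^1 t^{−m−1}(log t)^n/(1−t) dt − N(ε) tends to Σ_{i=1}^m n!/i^{n+1} + (−1)^{n+1} n! ζ(n+1) as ε → 0⁺. -/

import Mathlib

open MeasureTheory Real Filter Set

/-- A negligible function: a finite real linear combination of `ε ↦ ε^λ (log ε)^k`
with `λ < 0` real and `k ∈ ℕ`, and `ε ↦ (log ε)^k` with `k ≥ 1`. -/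
def Negligible (N : ℝ → ℝ) : Prop :=
  ∃ (s : Finset (ℝ × ℕ)) (c : ℝ × ℕ → ℝ) (T : Finset ℕ) (d : ℕ → ℝ),
    (∀ p ∈ s, p.1 < 0) ∧ (∀ k ∈ T, 1 ≤ k) ∧
    ∀ ε : ℝ, N ε = (∑ p ∈ s, c p * ε ^ p.1 * Real.log ε ^ p.2) +
      ∑ k ∈ T, d k * Real.log ε ^ k

/-- `NeutrixLim F c` : the neutrix limit of `F ε` as `ε → 0⁺` is `c`, i.e. there is a
negligible function `N` with `F ε − N ε → c` as `ε → 0⁺`. -/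
def NeutrixLim (F : ℝ → ℝ) (c : ℝ) : Prop :=
  ∃ N : ℝ → ℝ, Negligible N ∧
    Tendsto (fun ε => F ε - N ε) (nhdsWithin 0 (Set.Ioi 0)) (nhds c)

noncomputable def Gf (b : ℝ) : ℕ → ℝ → ℝ
  | 0 => fun t => t ^ b / b
  | (p+1) => fun t => t ^ b * Real.log t ^ (p+1) / b - ((p+1 : ℝ)/b) * Gf b p t

lemma Gf_hasDerivAt {b : ℝ} (hb : b ≠ 0) (p : ℕ) {t : ℝ} (ht : 0 < t) :
    HasDerivAt (Gf b p) (t ^ (b-1) * Real.log t ^ p) t := by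
  induction p with
  | zero =>
    simpa [Gf, mul_div_assoc, mul_div_cancel_left₀ _ hb] using
      (Real.hasDerivAt_rpow_const (p := b) (Or.inl ht.ne')).div_const b
  | succ p ih =>
    have h1 : HasDerivAt (fun t : ℝ => t ^ b * Real.log t ^ (p+1))
        (b * t ^ (b-1) * Real.log t ^ (p+1) + t ^ b * (((p+1:ℕ):ℝ) * Real.log t ^ p * t⁻¹)) t :=
      (Real.hasDerivAt_rpow_const (p := b) (Or.inl ht.ne')).mul
        ((Real.hasDerivAt_log ht.ne').pow (p+1))
    have h2 := (h1.div_const b).sub (ih.const_mul ((p+1 : ℝ)/b))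
    have key : t ^ b * t⁻¹ = t ^ (b-1) := by
      rw [Real.rpow_sub ht, Real.rpow_one, div_eq_mul_inv]
    convert h2 using 1
    · rfl
    · rfl
    · rfl
    rw [show t ^ b * (((p+1:ℕ):ℝ) * Real.log t ^ p * t⁻¹)
        = ((p+1:ℕ):ℝ) * Real.log t ^ p * t ^ (b-1) by rw [← key]; ring]
    push_cast
    field_simp
    ring
lemma Gf_one {b : ℝ} (hb : b ≠ 0) (p : ℕ) :
    Gf b p 1 = (-1) ^ p * p.factorial / b ^ (p+1) := by
  induction p with
  | zero => simp [Gf]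
  | succ p ih =>
    simp only [Gf, Real.log_one, Real.one_rpow, ih]
    rw [zero_pow (Nat.succ_ne_zero p)]
    field_simp [Nat.factorial_succ]
    push_cast [Nat.factorial_succ]
    ring

lemma Gf_nonneg {b : ℝ} (hb : 0 < b) (p : ℕ) {t : ℝ} (ht : 0 < t) (ht1 : t < 1) :
    0 ≤ (-1) ^ p * Gf b p t := by
  induction p with
  | zero =>
    simp only [Gf, pow_zero, one_mul]
    positivity
  | succ p ih =>
    have hL : Real.log t ≤ 0 := Real.log_nonpos ht.le ht1.le
    have h1 : (-1:ℝ) ^ (p+1) * (t ^ b * Real.log t ^ (p+1) / b)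
        = t ^ b * (-Real.log t) ^ (p+1) / b := by
      rw [neg_pow (Real.log t)]; ring
    simp only [Gf]
    rw [mul_sub, h1]
    have h2 : (-1:ℝ)^(p+1) * ((↑p+1)/b * Gf b p t) = -(((↑p+1)/b) * ((-1)^p * Gf b p t)) := by
      rw [pow_succ]; ring
    rw [h2, sub_neg_eq_add]
    have : (0:ℝ) ≤ t ^ b * (-Real.log t) ^ (p+1) / b :=
      div_nonneg (mul_nonneg (Real.rpow_nonneg ht.le b)
        (pow_nonneg (neg_nonneg.2 hL) _)) hb.le
    have h3 : (0:ℝ) ≤ (↑p+1)/b * ((-1)^p * Gf b p t) :=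
      mul_nonneg (by positivity) ih
    linarith

lemma Gf_tendsto {b : ℝ} (hb : 0 < b) (p : ℕ) :
    Tendsto (Gf b p) (nhdsWithin 0 (Set.Ioi 0)) (nhds 0) := by
  have hrp : ∀ r : ℝ, 0 < r → Tendsto (fun x : ℝ => x ^ r) (nhdsWithin 0 (Set.Ioi 0)) (nhds 0) := by
    intro r hr
    have := (Real.continuousAt_rpow_const 0 r (Or.inr hr.le)).tendsto
    rw [Real.zero_rpow hr.ne'] at this
    exact this.mono_left nhdsWithin_le_nhds
  induction p with
  | zero =>
    simpa [Gf] using (hrp b hb).div_const b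
  | succ p ih =>
    have h1 : Tendsto (fun x : ℝ => (Real.log x * x ^ (b/(p+1))) ^ (p+1))
        (nhdsWithin 0 (Set.Ioi 0)) (nhds 0) := by
      have := (tendsto_log_mul_rpow_nhdsGT_zero (by positivity : (0:ℝ) < b/(p+1))).pow (p+1)
      simpa [zero_pow (Nat.succ_ne_zero p)] using this
    have h2 : Tendsto (fun x : ℝ => x ^ b * Real.log x ^ (p+1))
        (nhdsWithin 0 (Set.Ioi 0)) (nhds 0) := by
      refine h1.congr' ?_
      filter_upwards [self_mem_nhdsWithin] with x (hx : 0 < x)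
      rw [mul_pow, ← Real.rpow_natCast (x ^ (b/(p+1))) (p+1), ← Real.rpow_mul hx.le]
      have : b / (↑p+1) * (↑(p+1):ℝ) = b := by
        push_cast; field_simp
      rw [this]; ring
    have := (h2.div_const b).sub (ih.const_mul ((p+1:ℝ)/b))
    simpa [Gf] using this

lemma contOn_rpow_log (c : ℝ) (p : ℕ) {s : Set ℝ} (hs : ∀ t ∈ s, t ≠ 0) :
    ContinuousOn (fun t : ℝ => t ^ c * Real.log t ^ p) s := by
  apply ContinuousOn.mul
  · exact fun t ht => (Real.continuousAt_rpow_const t c (Or.inl (hs t ht))).continuousWithinAt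
  · exact (Real.continuousOn_log.mono fun t ht => hs t ht).pow p

lemma integral_rpow_log {b : ℝ} (hb : b ≠ 0) (p : ℕ) {ε : ℝ} (h0 : 0 < ε) (h1 : ε < 1) :
    ∫ t in Set.Ioo ε 1, t ^ (b-1) * Real.log t ^ p = Gf b p 1 - Gf b p ε := by
  rw [← integral_Ioc_eq_integral_Ioo, ← intervalIntegral.integral_of_le h1.le]
  refine intervalIntegral.integral_eq_sub_of_hasDerivAt ?_ ?_
  · intro t ht
    rw [uIcc_of_le h1.le] at ht
    exact Gf_hasDerivAt hb p (lt_of_lt_of_le h0 ht.1)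
  · rw [intervalIntegrable_iff, uIoc_of_le h1.le]
    refine ((contOn_rpow_log (b-1) p ?_).integrableOn_Icc).mono_set Ioc_subset_Icc_self
    exact fun t ht => (lt_of_lt_of_le h0 ht.1).ne'

lemma integral_inv_log (p : ℕ) {ε : ℝ} (h0 : 0 < ε) (h1 : ε < 1) :
    ∫ t in Set.Ioo ε 1, t ^ (-1:ℝ) * Real.log t ^ p
      = -(Real.log ε ^ (p+1) / (p+1)) := by
  rw [← integral_Ioc_eq_integral_Ioo, ← intervalIntegral.integral_of_le h1.le]
  have key : ∫ t in ε..1, t ^ (-1:ℝ) * Real.log t ^ p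
      = Real.log 1 ^ (p+1) / (p+1) - Real.log ε ^ (p+1) / (p+1) := by
    refine intervalIntegral.integral_eq_sub_of_hasDerivAt (f := fun t => Real.log t ^ (p+1) / (p+1)) ?_ ?_
    · intro t ht
      rw [uIcc_of_le h1.le] at ht
      have ht0 : (0:ℝ) < t := lt_of_lt_of_le h0 ht.1
      have := ((Real.hasDerivAt_log ht0.ne').pow (p+1)).div_const ((p:ℝ)+1)
      convert this using 1
      · rfl
      · rfl
      rw [Real.rpow_neg_one]
      push_cast
      field_simp
    · rw [intervalIntegrable_iff, uIoc_of_le h1.le]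
      refine ((contOn_rpow_log (-1) p ?_).integrableOn_Icc).mono_set Ioc_subset_Icc_self
      exact fun t ht => (lt_of_lt_of_le h0 ht.1).ne'
  rw [key, Real.log_one, zero_pow (Nat.succ_ne_zero p), zero_div, zero_sub]

lemma integrableOn_rpow_log {b : ℝ} (hb : 0 < b) (p : ℕ) :
    IntegrableOn (fun t : ℝ => t ^ (b-1) * Real.log t ^ p) (Set.Ioo 0 1) := by
  set f := fun t : ℝ => t ^ (b-1) * Real.log t ^ p with hf
  have hfi : ∀ i : ℕ, IntegrableOn f (Set.Ioc (1/((i:ℝ)+1)) 1) := by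
    intro i
    have hpos : (0:ℝ) < 1/((i:ℝ)+1) := by positivity
    refine ((contOn_rpow_log (b-1) p ?_).integrableOn_Icc).mono_set Ioc_subset_Icc_self
    exact fun t ht => (lt_of_lt_of_le hpos ht.1).ne'
  have key : IntegrableOn f (Set.Ioc 0 1) := by
    refine integrableOn_Ioc_of_intervalIntegral_norm_bounded_left
      (I := p.factorial / b^(p+1)) hfi tendsto_one_div_add_atTop_nhds_zero_nat ?_
    filter_upwards [Filter.eventually_ge_atTop 1] with i hi
    set ε := 1/((i:ℝ)+1) with hε
    have h0 : (0:ℝ) < ε := by positivity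
    have h1 : ε < 1 := by
      rw [hε, div_lt_one (by positivity)]
      have : (1:ℝ) ≤ (i:ℝ) := by exact_mod_cast hi
      linarith
    have heq : ∫ x in Set.Ioc ε 1, ‖f x‖ = (-1)^p * ∫ t in Set.Ioo ε 1, f t := by
      rw [integral_Ioc_eq_integral_Ioo, ← integral_const_mul]
      refine setIntegral_congr_fun measurableSet_Ioo fun t ht => ?_
      have ht0 : (0:ℝ) < t := h0.trans ht.1
      have hL : Real.log t ≤ 0 := Real.log_nonpos ht0.le ht.2.le
      rw [hf]
      simp only [Real.norm_eq_abs, abs_mul, abs_pow,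
        abs_of_nonneg (Real.rpow_nonneg ht0.le (b-1)), abs_of_nonpos hL]
      rw [neg_pow (Real.log t)]
      ring
    rw [heq, integral_rpow_log hb.ne' p h0 h1, Gf_one hb.ne' p]
    have hnn := Gf_nonneg hb p h0 h1
    have hsq : ((-1:ℝ))^p * ((-1:ℝ))^p = 1 := by
      rw [← pow_add]; exact Even.neg_one_pow ⟨p, by ring⟩
    have : (-1:ℝ)^p * ((-1)^p * ↑p.factorial / b^(p+1) - Gf b p ε)
        = ↑p.factorial / b^(p+1) - (-1)^p * Gf b p ε := by
      field_simp
      nlinarith [hsq]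
    rw [this]
    linarith
  exact key.mono_set Set.Ioo_subset_Ioc_self

lemma tendsto_setIntegral_Ioo {h : ℝ → ℝ} (hint : IntegrableOn h (Set.Ioo 0 1)) :
    Tendsto (fun ε => ∫ t in Set.Ioo ε 1, h t) (nhdsWithin 0 (Set.Ioi 0))
      (nhds (∫ t in Set.Ioo 0 1, h t)) := by
  have key : ∀ ε : ℝ, 0 < ε →
      ∫ t in Set.Ioo ε 1, h t
        = ∫ t, (Set.Ioi ε).indicator h t ∂(volume.restrict (Set.Ioo 0 1)) := by
    intro ε hε
    rw [integral_indicator measurableSet_Ioi, Measure.restrict_restrict measurableSet_Ioi,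
      show Set.Ioi ε ∩ Set.Ioo 0 1 = Set.Ioo ε 1 by
        ext t
        exact ⟨fun ⟨h1, h2, h3⟩ => ⟨h1, h3⟩, fun ⟨h1, h2⟩ => ⟨h1, hε.trans h1, h2⟩⟩]
  have main : Tendsto (fun ε => ∫ t, (Set.Ioi ε).indicator h t ∂(volume.restrict (Set.Ioo 0 1)))
      (nhdsWithin 0 (Set.Ioi 0)) (nhds (∫ t in Set.Ioo 0 1, h t)) := by
    refine tendsto_integral_filter_of_dominated_convergence (fun t => ‖h t‖) ?_ ?_ hint.norm ?_
    · exact Filter.Eventually.of_forall fun ε => hint.aestronglyMeasurable.indicator measurableSet_Ioi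
    · exact Filter.Eventually.of_forall fun ε =>
        ae_of_all _ fun t => norm_indicator_le_norm_self h t
    · filter_upwards [ae_restrict_mem measurableSet_Ioo] with t ht
      refine Filter.Tendsto.congr' ?_ tendsto_const_nhds
      filter_upwards [Ioo_mem_nhdsGT_of_mem ⟨le_refl 0, ht.1⟩] with ε hε
      exact (Set.indicator_of_mem (Set.mem_Ioi.2 hε.2) h).symm
  refine main.congr' ?_
  filter_upwards [self_mem_nhdsWithin] with ε (hε : 0 < ε)
  exact (key ε hε).symm

lemma integral_rpow_log_Ioo {b : ℝ} (hb : 0 < b) (p : ℕ) :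
    ∫ t in Set.Ioo (0:ℝ) 1, t ^ (b-1) * Real.log t ^ p
      = (-1)^p * p.factorial / b^(p+1) := by
  have h1 := tendsto_setIntegral_Ioo (integrableOn_rpow_log hb p)
  have h2 : Tendsto (fun ε => ∫ t in Set.Ioo ε 1, t ^ (b-1) * Real.log t ^ p)
      (nhdsWithin 0 (Set.Ioi 0)) (nhds (Gf b p 1)) := by
    have := (tendsto_const_nhds (α := ℝ) (x := Gf b p 1)
      (f := nhdsWithin 0 (Set.Ioi 0))).sub (Gf_tendsto hb p)
    rw [sub_zero] at this
    refine this.congr' ?_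
    filter_upwards [Ioo_mem_nhdsGT one_pos] with ε hε
    exact (integral_rpow_log hb.ne' p hε.1 hε.2).symm
  rw [← Gf_one hb.ne' p]
  exact tendsto_nhds_unique h1 h2

lemma neg_log_le {t : ℝ} (ht0 : 0 < t) (ht1 : t < 1) :
    -Real.log t ≤ 2 * (1 - t) / Real.sqrt t := by
  have hst : 0 < Real.sqrt t := Real.sqrt_pos.2 ht0
  have h1 : Real.log (Real.sqrt t)⁻¹ ≤ (Real.sqrt t)⁻¹ - 1 :=
    Real.log_le_sub_one_of_pos (inv_pos.2 hst)
  rw [Real.log_inv, Real.log_sqrt ht0.le] at h1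
  have h2 : t ≤ Real.sqrt t := by
    have : t = Real.sqrt (t^2) := (Real.sqrt_sq ht0.le).symm
    rw [this]
    exact Real.sqrt_le_sqrt (by nlinarith)
  have h3 : (Real.sqrt t)⁻¹ - 1 = (1 - Real.sqrt t) / Real.sqrt t := by
    field_simp
  rw [h3] at h1
  have h4 : (1 - Real.sqrt t) / Real.sqrt t ≤ (1 - t) / Real.sqrt t := by
    gcongr
  have h5 := h1.trans h4
  rw [mul_div_assoc]
  linarith

lemma integrableOn_g {n : ℕ} (hn : 1 ≤ n) :
    IntegrableOn (fun t : ℝ => Real.log t ^ n / (1 - t)) (Set.Ioo 0 1) := by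
  have hD : IntegrableOn (fun t : ℝ => t ^ ((1/2:ℝ)-1) * Real.log t ^ (n-1)) (Set.Ioo 0 1) :=
    integrableOn_rpow_log (by norm_num) (n-1)
  have hD2 := hD.const_mul 2
  refine Integrable.mono hD2 ?_ ?_
  · refine ContinuousOn.aestronglyMeasurable ?_ measurableSet_Ioo
    apply ContinuousOn.div
    · exact (Real.continuousOn_log.mono fun t ht => ht.1.ne').pow n
    · exact (continuous_const.sub continuous_id).continuousOn
    · intro t ht
      exact sub_ne_zero.2 (ne_of_gt ht.2)
  · rw [ae_restrict_iff' measurableSet_Ioo]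
    refine ae_of_all _ fun t ht => ?_
    obtain ⟨ht0, ht1⟩ := ht
    have h1t : (0:ℝ) < 1 - t := by linarith
    have hL : Real.log t ≤ 0 := Real.log_nonpos ht0.le ht1.le
    have habs : |Real.log t| = -Real.log t := abs_of_nonpos hL
    have hrw : t ^ ((1/2:ℝ)-1) = (Real.sqrt t)⁻¹ := by
      rw [show (1/2:ℝ)-1 = -(1/2) by norm_num, Real.rpow_neg ht0.le, Real.sqrt_eq_rpow]
    have key : -Real.log t ≤ 2 * (1 - t) / Real.sqrt t := neg_log_le ht0 ht1
    calc ‖Real.log t ^ n / (1 - t)‖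
        = |Real.log t| ^ (n-1) * (-Real.log t) / (1 - t) := by
          rw [Real.norm_eq_abs, abs_div, abs_of_pos h1t, abs_pow, ← habs,
            ← pow_succ, Nat.sub_add_cancel hn]
      _ ≤ |Real.log t| ^ (n-1) * (2 * (1 - t) / Real.sqrt t) / (1 - t) := by
          gcongr
      _ = 2 * (t ^ ((1/2:ℝ)-1) * |Real.log t| ^ (n-1)) := by
          rw [hrw]
          have hst : Real.sqrt t ≠ 0 := (Real.sqrt_pos.2 ht0).ne'
          field_simp
      _ ≤ ‖2 * (t ^ ((1/2:ℝ)-1) * Real.log t ^ (n-1))‖ := by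
          rw [Real.norm_eq_abs, abs_mul, abs_mul, abs_pow, abs_of_nonneg (by norm_num : (0:ℝ) ≤ 2),
            abs_of_nonneg (Real.rpow_nonneg ht0.le _)]

lemma summable_aux {n : ℕ} (hn : 1 ≤ n) : Summable (fun k : ℕ => 1/((k:ℝ)+1)^(n+1)) := by
  have h1 : Summable (fun k : ℕ => 1/(k:ℝ)^(n+1)) :=
    Real.summable_one_div_nat_pow.2 (by omega)
  have h2 := (summable_nat_add_iff 1).2 h1
  refine h2.congr fun k => ?_
  push_cast
  ring_nf

lemma integral_g {n : ℕ} (hn : 1 ≤ n) :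
    ∫ t in Set.Ioo (0:ℝ) 1, Real.log t ^ n / (1 - t)
      = (-1)^n * (n.factorial : ℝ) * ∑' k : ℕ, 1/((k:ℝ)+1)^(n+1) := by
  set μ := volume.restrict (Set.Ioo (0:ℝ) 1) with hμ
  set F : ℕ → ℝ → ℝ := fun k t => t ^ ((k:ℝ)) * Real.log t ^ n with hF
  have hbpos : ∀ k : ℕ, (0:ℝ) < (k:ℝ)+1 := fun k => by positivity
  have hbsub : ∀ k : ℕ, ((k:ℝ)+1) - 1 = (k:ℝ) := fun k => by ring
  have hFint : ∀ k, Integrable (F k) μ := by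
    intro k
    have := integrableOn_rpow_log (hbpos k) n
    rw [hbsub k] at this
    exact this
  have hFval : ∀ k, ∫ t, F k t ∂μ = (-1)^n * (n.factorial : ℝ) / ((k:ℝ)+1)^(n+1) := by
    intro k
    have := integral_rpow_log_Ioo (hbpos k) n
    rw [hbsub k] at this
    exact this
  have hFnorm : ∀ k, ∫ t, ‖F k t‖ ∂μ = (n.factorial : ℝ) / ((k:ℝ)+1)^(n+1) := by
    intro k
    have heq : ∫ t, ‖F k t‖ ∂μ = (-1)^n * ∫ t, F k t ∂μ := by
      rw [hμ, ← integral_const_mul]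
      refine setIntegral_congr_fun measurableSet_Ioo fun t ht => ?_
      have hL : Real.log t ≤ 0 := Real.log_nonpos ht.1.le ht.2.le
      simp only [hF, Real.norm_eq_abs, abs_mul, abs_pow,
        abs_of_nonneg (Real.rpow_nonneg ht.1.le _), abs_of_nonpos hL]
      rw [neg_pow (Real.log t)]
      ring
    rw [heq, hFval k]
    have hsq : ((-1:ℝ))^n * ((-1:ℝ))^n = 1 := by
      rw [← pow_add]; exact Even.neg_one_pow ⟨n, by ring⟩
    field_simp
    nlinarith [hsq]
  have hsum : Summable fun k => ∫ t, ‖F k t‖ ∂μ := by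
    refine Summable.congr ((summable_aux hn).mul_left (n.factorial : ℝ)) fun k => ?_
    rw [hFnorm k]
    ring
  have key := integral_tsum_of_summable_integral_norm hFint hsum
  have lhs : ∑' k, ∫ t, F k t ∂μ
      = (-1)^n * (n.factorial : ℝ) * ∑' k : ℕ, 1/((k:ℝ)+1)^(n+1) := by
    rw [← tsum_mul_left]
    refine tsum_congr fun k => ?_
    rw [hFval k]
    ring
  have rhs : ∫ t, (∑' k, F k t) ∂μ = ∫ t in Set.Ioo (0:ℝ) 1, Real.log t ^ n / (1 - t) := by
    refine setIntegral_congr_fun measurableSet_Ioo fun t ht => ?_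
    have h1 : ∀ k : ℕ, F k t = t ^ k * Real.log t ^ n := fun k => by
      rw [hF]; simp [Real.rpow_natCast]
    rw [tsum_congr h1, tsum_mul_right, tsum_geometric_of_lt_one ht.1.le ht.2]
    rw [div_eq_mul_inv]
    ring
  rw [← lhs, key, rhs]

lemma negligible_congr {A B : ℝ → ℝ} (h : ∀ ε, A ε = B ε) (hA : Negligible A) : Negligible B := by
  obtain ⟨s, c, T, d, h1, h2, h3⟩ := hA
  exact ⟨s, c, T, d, h1, h2, fun ε => (h ε) ▸ h3 ε⟩

lemma negligible_zero : Negligible (fun _ => 0) :=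
  ⟨∅, 0, ∅, 0, by simp, by simp, by simp⟩

lemma negligible_add {A B : ℝ → ℝ} (hA : Negligible A) (hB : Negligible B) :
    Negligible (fun ε => A ε + B ε) := by
  obtain ⟨s₁, c₁, T₁, d₁, hs₁, hT₁, hE₁⟩ := hA
  obtain ⟨s₂, c₂, T₂, d₂, hs₂, hT₂, hE₂⟩ := hB
  refine ⟨s₁ ∪ s₂, fun p => (if p ∈ s₁ then c₁ p else 0) + (if p ∈ s₂ then c₂ p else 0),
    T₁ ∪ T₂, fun k => (if k ∈ T₁ then d₁ k else 0) + (if k ∈ T₂ then d₂ k else 0),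
    ?_, ?_, ?_⟩
  · intro p hp
    rcases Finset.mem_union.1 hp with h | h
    exacts [hs₁ p h, hs₂ p h]
  · intro k hk
    rcases Finset.mem_union.1 hk with h | h
    exacts [hT₁ k h, hT₂ k h]
  · intro ε
    have key : ∀ (u : Finset (ℝ × ℕ)) (hu : u ⊆ s₁ ∪ s₂) (c : ℝ × ℕ → ℝ),
        ∑ p ∈ s₁ ∪ s₂, (if p ∈ u then c p else 0) * ε ^ p.1 * Real.log ε ^ p.2
          = ∑ p ∈ u, c p * ε ^ p.1 * Real.log ε ^ p.2 := by
      intro u hu c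
      rw [← Finset.sum_subset hu (fun p _ hp => by rw [if_neg hp]; ring)]
      exact Finset.sum_congr rfl fun p hp => by rw [if_pos hp]
    have keyT : ∀ (u : Finset ℕ) (hu : u ⊆ T₁ ∪ T₂) (d : ℕ → ℝ),
        ∑ k ∈ T₁ ∪ T₂, (if k ∈ u then d k else 0) * Real.log ε ^ k
          = ∑ k ∈ u, d k * Real.log ε ^ k := by
      intro u hu d
      rw [← Finset.sum_subset hu (fun k _ hk => by rw [if_neg hk]; ring)]
      exact Finset.sum_congr rfl fun k hk => by rw [if_pos hk]
    simp only [add_mul, Finset.sum_add_distrib]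
    rw [key s₁ Finset.subset_union_left c₁, key s₂ Finset.subset_union_right c₂,
      keyT T₁ Finset.subset_union_left d₁, keyT T₂ Finset.subset_union_right d₂,
      hE₁ ε, hE₂ ε]
    ring

lemma negligible_smul (a : ℝ) {A : ℝ → ℝ} (hA : Negligible A) :
    Negligible (fun ε => a * A ε) := by
  obtain ⟨s, c, T, d, h1, h2, h3⟩ := hA
  refine ⟨s, fun p => a * c p, T, fun k => a * d k, h1, h2, fun ε => ?_⟩
  show a * A ε = _
  rw [h3 ε]
  rw [mul_add, Finset.mul_sum, Finset.mul_sum]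
  congr 1
  · exact Finset.sum_congr rfl fun p _ => by ring
  · exact Finset.sum_congr rfl fun k _ => by ring

lemma negligible_block1 {lam : ℝ} (hlam : lam < 0) (a : ℝ) (k : ℕ) :
    Negligible (fun ε => a * ε ^ lam * Real.log ε ^ k) := by
  refine ⟨{(lam, k)}, fun _ => a, ∅, 0, ?_, by simp, fun ε => by simp⟩
  intro p hp
  rw [Finset.mem_singleton.1 hp]
  exact hlam

lemma negligible_block2 {k : ℕ} (hk : 1 ≤ k) (a : ℝ) :
    Negligible (fun ε => a * Real.log ε ^ k) := by
  refine ⟨∅, 0, {k}, fun _ => a, by simp, ?_, fun ε => by simp⟩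
  intro j hj
  rw [Finset.mem_singleton.1 hj]
  exact hk

lemma negligible_finset_sum {ι : Type*} (s : Finset ι) (f : ι → ℝ → ℝ)
    (h : ∀ i ∈ s, Negligible (f i)) : Negligible (fun ε => ∑ i ∈ s, f i ε) := by
  classical
  induction s using Finset.induction_on with
  | empty => exact negligible_congr (fun ε => by simp) negligible_zero
  | @insert i u hni ih =>
    refine negligible_congr (fun ε => ?_)
      (negligible_add (h i (Finset.mem_insert_self i u))
        (ih fun j hj => h j (Finset.mem_insert_of_mem hj)))
    rw [Finset.sum_insert hni]

lemma negligible_Gf {b : ℝ} (hb : b < 0) (p : ℕ) : Negligible (Gf b p) := by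
  induction p with
  | zero =>
    refine negligible_congr (fun ε => ?_) (negligible_block1 hb (1/b) 0)
    simp only [Gf, pow_zero, mul_one]
    ring
  | succ p ih =>
    refine negligible_congr (fun ε => ?_)
      (negligible_add (negligible_block1 hb (1/b) (p+1))
        (negligible_smul (-((p:ℝ)+1)/b) ih))
    simp only [Gf]
    ring

lemma sum_Icc_cast (m n : ℕ) :
    (∑ i ∈ Finset.Icc 1 m, (n.factorial : ℝ) / (i : ℝ) ^ (n + 1))
      = ∑ j ∈ Finset.range m, (n.factorial : ℝ) / ((j:ℝ)+1) ^ (n + 1) := by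
  rw [← Finset.Ico_add_one_right_eq_Icc, Finset.sum_Ico_eq_sum_range]
  norm_num
  refine Finset.sum_congr rfl fun j _ => ?_
  rw [add_comm]

lemma Gf_one_neg (j n : ℕ) :
    Gf (-(j:ℝ)-1) n 1 = -((n.factorial : ℝ) / ((j:ℝ)+1) ^ (n+1)) := by
  have hj : (0:ℝ) ≤ (j:ℝ) := j.cast_nonneg
  have hb : (-(j:ℝ)-1) ≠ 0 := by intro h; nlinarith
  rw [Gf_one hb]
  have h1 : (-(j:ℝ)-1)^(n+1) = (-1)^(n+1) * ((j:ℝ)+1)^(n+1) := by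
    rw [show -(j:ℝ)-1 = -((j:ℝ)+1) by ring, neg_pow]
  rw [h1]
  have hy : ((j:ℝ)+1)^(n+1) ≠ 0 := by positivity
  rcases Nat.even_or_odd n with he | ho
  · rw [Even.neg_one_pow he, Odd.neg_one_pow (Even.add_one he)]
    field_simp
  · rw [Odd.neg_one_pow ho, Even.neg_one_pow (Odd.add_one ho)]
    field_simp

lemma decomp (m : ℕ) {t : ℝ} (ht0 : 0 < t) (ht1 : t < 1) :
    t ^ (-(m:ℝ)-1) = (1-t) * (∑ j ∈ Finset.range (m+1), t ^ (-(j:ℝ)-1)) + 1 := by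
  have htne : t ≠ 0 := ht0.ne'
  induction m with
  | zero =>
    simp only [zero_add, Nat.cast_zero, neg_zero, zero_sub, Finset.sum_range_one, Real.rpow_neg_one]
    field_simp
    ring
  | succ m ih =>
    have h1 : t ^ (-((m+1:ℕ):ℝ)-1) = t ^ (-1:ℝ) * t ^ (-(m:ℝ)-1) := by
      rw [← Real.rpow_add ht0]; congr 1; push_cast; ring
    have h2 : ∑ j ∈ Finset.range (m+1+1), t ^ (-(j:ℝ)-1)
        = (∑ j ∈ Finset.range (m+1), t ^ (-((j+1:ℕ):ℝ)-1)) + t ^ (-((0:ℕ):ℝ)-1) :=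
      Finset.sum_range_succ' _ _
    have h3 : ∀ j : ℕ, t ^ (-((j+1:ℕ):ℝ)-1) = t ^ (-1:ℝ) * t ^ (-(j:ℝ)-1) := by
      intro j; rw [← Real.rpow_add ht0]; congr 1; push_cast; ring
    rw [h1, ih, h2]
    simp only [h3]
    rw [← Finset.mul_sum]
    simp only [Nat.cast_zero, neg_zero, zero_sub]
    rw [Real.rpow_neg_one]
    field_simp
    ring

theorem stmt14 (n m : ℕ) (hn : 1 ≤ n) :
    NeutrixLim (fun ε => -∫ t in Set.Ioo ε 1, t ^ (-(m : ℝ) - 1) * Real.log t ^ n / (1 - t))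
      ((∑ i ∈ Finset.Icc 1 m, (n.factorial : ℝ) / (i : ℝ) ^ (n + 1)) +
        (-1) ^ (n + 1) * (n.factorial : ℝ) * ∑' k : ℕ, 1 / ((k : ℝ) + 1) ^ (n + 1)) := by
  classical
  set g : ℝ → ℝ := fun t => Real.log t ^ n / (1 - t) with hgdef
  have hg : IntegrableOn g (Set.Ioo 0 1) := integrableOn_g hn
  set C₁ : ℝ := ∑ j ∈ Finset.range m, (n.factorial : ℝ) / ((j:ℝ)+1) ^ (n + 1) with hC₁
  refine ⟨fun ε => (1/((n:ℝ)+1)) * Real.log ε ^ (n+1)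
      + ∑ j ∈ Finset.range m, Gf (-(j:ℝ)-1) n ε, ?_, ?_⟩
  · exact negligible_add (negligible_block2 (by omega) (1/((n:ℝ)+1)))
      (negligible_finset_sum (Finset.range m) (fun j => Gf (-(j:ℝ)-1) n)
        (fun j _ => negligible_Gf (by
          have : (0:ℝ) ≤ (j:ℝ) := j.cast_nonneg
          linarith) n))
  · have hTend : Tendsto (fun ε => C₁ - ∫ t in Set.Ioo ε 1, g t)
        (nhdsWithin 0 (Set.Ioi 0))
        (nhds (C₁ - ((-1)^n * (n.factorial : ℝ) * ∑' k : ℕ, 1/((k:ℝ)+1) ^ (n+1)))) := by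
      have := (tendsto_const_nhds (α := ℝ) (x := C₁)
        (f := nhdsWithin 0 (Set.Ioi 0))).sub (tendsto_setIntegral_Ioo hg)
      rwa [integral_g hn] at this
    have hconst : (∑ i ∈ Finset.Icc 1 m, (n.factorial : ℝ) / (i : ℝ) ^ (n + 1)) +
        (-1) ^ (n + 1) * (n.factorial : ℝ) * ∑' k : ℕ, 1 / ((k : ℝ) + 1) ^ (n + 1)
        = C₁ - ((-1)^n * (n.factorial : ℝ) * ∑' k : ℕ, 1/((k:ℝ)+1) ^ (n+1)) := by
      rw [hC₁, ← sum_Icc_cast m n, pow_succ]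
      ring
    rw [hconst]
    refine Tendsto.congr' ?_ hTend
    filter_upwards [Ioo_mem_nhdsGT one_pos] with ε hε
    obtain ⟨hε0, hε1⟩ := hε
    -- integrability of pieces
    have hint3 : ∀ j ∈ Finset.range (m+1),
        IntegrableOn (fun t : ℝ => t ^ (-(j:ℝ)-1) * Real.log t ^ n) (Set.Ioo ε 1) := by
      intro j _
      exact ((contOn_rpow_log (-(j:ℝ)-1) n
        (fun t ht => (hε0.trans_le ht.1).ne')).integrableOn_Icc).mono_set Ioo_subset_Icc_self
    have hint2 : IntegrableOn g (Set.Ioo ε 1) := hg.mono_set (Set.Ioo_subset_Ioo_left hε0.le)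
    have hEq : Set.EqOn (fun t : ℝ => t ^ (-(m : ℝ) - 1) * Real.log t ^ n / (1 - t))
        (fun t : ℝ => (∑ j ∈ Finset.range (m+1), t ^ (-(j:ℝ)-1) * Real.log t ^ n) + g t)
        (Set.Ioo ε 1) := by
      intro t ht
      have ht0 : 0 < t := hε0.trans ht.1
      have h1t : (1:ℝ) - t ≠ 0 := sub_ne_zero.2 ht.2.ne'
      simp only [hgdef]
      rw [decomp m ht0 ht.2, ← Finset.sum_mul]
      field_simp
    have hsplit : (∫ t in Set.Ioo ε 1, t ^ (-(m : ℝ) - 1) * Real.log t ^ n / (1 - t))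
        = (∑ j ∈ Finset.range (m+1), ∫ t in Set.Ioo ε 1, t ^ (-(j:ℝ)-1) * Real.log t ^ n)
          + ∫ t in Set.Ioo ε 1, g t := by
      rw [setIntegral_congr_fun measurableSet_Ioo hEq,
        integral_add (integrable_finset_sum _ hint3) hint2,
        integral_finset_sum _ hint3]
    have hsum_val : (∑ j ∈ Finset.range (m+1), ∫ t in Set.Ioo ε 1, t ^ (-(j:ℝ)-1) * Real.log t ^ n)
        = (∑ j ∈ Finset.range m,
            (-((n.factorial : ℝ) / ((j:ℝ)+1) ^ (n+1)) - Gf (-(j:ℝ)-1) n ε))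
          + (-(Real.log ε ^ (n+1) / ((n:ℝ)+1))) := by
      rw [Finset.sum_range_succ']
      congr 1
      · refine Finset.sum_congr rfl fun j _ => ?_
        have hj : (0:ℝ) ≤ (j:ℝ) := j.cast_nonneg
        have hb : (-(j:ℝ)-1) ≠ 0 := by intro h; nlinarith
        have heq : (∫ t in Set.Ioo ε 1, t ^ (-((j+1:ℕ):ℝ)-1) * Real.log t ^ n)
            = Gf (-(j:ℝ)-1) n 1 - Gf (-(j:ℝ)-1) n ε := by
          have h0 := integral_rpow_log hb n hε0 hε1
          rw [show (-(j:ℝ)-1) - 1 = -((j+1:ℕ):ℝ)-1 by push_cast; ring] at h0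
          exact h0
        rw [heq, Gf_one_neg j n]
      · simp only [Nat.cast_zero, neg_zero, zero_sub]
        exact integral_inv_log n hε0 hε1
    show C₁ - ∫ t in Set.Ioo ε 1, g t = _
    rw [hsplit, hsum_val, hC₁]
    simp only [Finset.sum_sub_distrib, Finset.sum_neg_distrib]
    ring
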